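/- Let G be a finite tree (a connected acyclic simple graph). Then G is weakly closed if and only if G is bigclaw-free, i.e., there is no graph embedding (injective map preserving both adjacency and non-adjacency) of the bigclaw into G. -/

import Mathlib

/-- `G` is weakly closed: some labeling of the vertices by `1, …, n` is such that for
every edge `{i, j}` with `i < j` and every `i < k < j`, `{i,k} ∈ E(G)` or `{k,j} ∈ E(G)`. -/
def WeaklyClosed {V : Type*} [Fintype V] (G : SimpleGraph V) : Prop :=
  ∃ σ : V ≃ Fin (Fintype.card V), ∀ i j k : V,
    G.Adj i j → σ i < σ k → σ k < σ j → G.Adj i k ∨ G.Adj k j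

/-- The bigclaw: the tree on seven vertices `c = 0`, `a₁ = 1`, `a₂ = 2`, `a₃ = 3`,
`b₁ = 4`, `b₂ = 5`, `b₃ = 6` with edges `{c,aᵢ}` and `{aᵢ,bᵢ}` for `i = 1, 2, 3`. -/
def bigclaw : SimpleGraph (Fin 7) :=
  SimpleGraph.fromEdgeSet {s(0, 1), s(0, 2), s(0, 3), s(1, 4), s(2, 5), s(3, 6)}

namespace TreeWC

open SimpleGraph Function

variable {V : Type*} {G : SimpleGraph V}

/-! ### Generalities about unique paths in trees -/

/-- The unique path between two vertices of a tree. -/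
noncomputable def pth (hG : G.IsTree) (x y : V) : G.Walk x y :=
  (hG.existsUnique_path x y).choose

lemma pth_isPath (hG : G.IsTree) (x y : V) : (pth hG x y).IsPath :=
  (hG.existsUnique_path x y).choose_spec.1

lemma pth_eq (hG : G.IsTree) {x y : V} (p : G.Walk x y) (hp : p.IsPath) :
    p = pth hG x y :=
  (hG.existsUnique_path x y).choose_spec.2 p hp

lemma dist_eq (hG : G.IsTree) (x y : V) : G.dist x y = (pth hG x y).length := by
  classical
  refine le_antisymm (SimpleGraph.dist_le _) ?_
  obtain ⟨w, hw⟩ := (hG.isConnected).exists_walk_length_eq_dist x y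
  calc (pth hG x y).length = w.bypass.length := by
        rw [← pth_eq hG w.bypass w.bypass_isPath]
    _ ≤ w.length := w.length_bypass_le
    _ = G.dist x y := hw

lemma dist_getVert_le (hconn : G.Connected) {x y : V} (p : G.Walk x y) :
    ∀ i, G.dist x (p.getVert i) ≤ i := by
  induction p with
  | nil => intro i; simp [SimpleGraph.Walk.getVert, SimpleGraph.dist_self]
  | @cons x x' y h q ih =>
    intro i
    cases i with
    | zero => simp [SimpleGraph.dist_self]
    | succ n =>
      have h1 : G.dist x x' = 1 := SimpleGraph.dist_eq_one_iff_adj.mpr h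
      calc G.dist x ((SimpleGraph.Walk.cons h q).getVert (n+1))
          = G.dist x (q.getVert n) := rfl
        _ ≤ G.dist x x' + G.dist x' (q.getVert n) := hconn.dist_triangle
        _ ≤ 1 + n := by have := ih n; omega
        _ = n + 1 := by omega

lemma dist_getVert (hG : G.IsTree) {x y : V} {i : ℕ} (hi : i ≤ (pth hG x y).length) :
    G.dist x ((pth hG x y).getVert i) = i ∧
      G.dist ((pth hG x y).getVert i) y + i = (pth hG x y).length := by
  have h1 := dist_getVert_le hG.isConnected (pth hG x y) i
  have h2 : G.dist ((pth hG x y).getVert i) y ≤ (pth hG x y).length - i := by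
    have h3 := dist_getVert_le hG.isConnected (pth hG x y).reverse ((pth hG x y).length - i)
    rw [SimpleGraph.Walk.getVert_reverse, Nat.sub_sub_self hi] at h3
    rwa [SimpleGraph.dist_comm]
  have h3 : G.dist x y ≤ G.dist x ((pth hG x y).getVert i)
      + G.dist ((pth hG x y).getVert i) y := hG.isConnected.dist_triangle
  have h4 : G.dist x y = (pth hG x y).length := dist_eq hG x y
  omega

lemma mem_support_sum (hG : G.IsTree) {x y z : V} (h : z ∈ (pth hG x y).support) :
    G.dist x z + G.dist z y = G.dist x y := by
  obtain ⟨i, hgi, hle⟩ := SimpleGraph.Walk.mem_support_iff_exists_getVert.mp h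
  obtain ⟨h1, h2⟩ := dist_getVert hG (x := x) (y := y) hle
  rw [hgi] at h1 h2
  rw [dist_eq hG x y]
  omega

lemma not_mem_pth_support (hG : G.IsTree) {u x y : V} (hd : G.dist u x < G.dist u y) :
    y ∉ (pth hG u x).support := by
  intro hy
  have h1 := mem_support_sum hG hy
  omega

/-- Adjacent vertices are at different distances from any vertex (in a tree). -/
lemma adj_dist_ne (hG : G.IsTree) (w : V) {x y : V} (hxy : G.Adj x y) :
    G.dist w x ≠ G.dist w y := by
  intro he
  have hy : y ∉ (pth hG w x).support := by
    intro hmem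
    have hs := mem_support_sum hG hmem
    have h0 : G.dist y x = 0 := by omega
    rw [SimpleGraph.dist_comm] at h0
    have : x = y := (hG.isConnected.dist_eq_zero_iff).mp h0
    exact hxy.ne this
  have hcp : ((pth hG w x).concat hxy).IsPath := by
    rw [SimpleGraph.Walk.isPath_def, SimpleGraph.Walk.support_concat]
    simp only [List.concat_eq_append, List.nodup_append]
    exact ⟨(pth_isPath hG w x).support_nodup, by simp, by
      rintro a ha b hb rfl; rw [List.mem_singleton] at hb; exact hy (hb ▸ ha)⟩
  have heq := pth_eq hG _ hcp
  have hlen : G.dist w y = (pth hG w x).length + 1 := by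
    rw [dist_eq hG w y, ← heq, SimpleGraph.Walk.length_concat]
  have hlx : G.dist w x = (pth hG w x).length := dist_eq hG w x
  omega

lemma adj_dist_succ (hG : G.IsTree) (w : V) {x y : V} (h : G.Adj x y) :
    G.dist w y = G.dist w x + 1 ∨ G.dist w x = G.dist w y + 1 := by
  have h0 := adj_dist_ne hG w h
  have h1 : G.dist x y = 1 := SimpleGraph.dist_eq_one_iff_adj.mpr h
  have h1' : G.dist y x = 1 := by rwa [SimpleGraph.dist_comm]
  have h2 : G.dist w y ≤ G.dist w x + G.dist x y := hG.isConnected.dist_triangle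
  have h3 : G.dist w x ≤ G.dist w y + G.dist y x := hG.isConnected.dist_triangle
  omega

/-- Uniqueness of the parent: a vertex has at most one neighbour closer to the root. -/
lemma upar_unique (hG : G.IsTree) {u x x' y : V} (h1 : G.Adj x y) (h2 : G.Adj x' y)
    (hd1 : G.dist u x + 1 = G.dist u y) (hd2 : G.dist u x' + 1 = G.dist u y) : x = x' := by
  have key : ∀ (z : V) (hz : G.Adj z y), G.dist u z + 1 = G.dist u y →
      (pth hG u y).getVert (G.dist u y - 1) = z := by
    intro z hz hd
    have hy : y ∉ (pth hG u z).support := not_mem_pth_support hG (by omega)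
    have hcp : ((pth hG u z).concat hz).IsPath := by
      rw [SimpleGraph.Walk.isPath_def, SimpleGraph.Walk.support_concat]
      simp only [List.concat_eq_append, List.nodup_append]
      exact ⟨(pth_isPath hG u z).support_nodup, by simp, by
        rintro a ha b hb rfl; rw [List.mem_singleton] at hb; exact hy (hb ▸ ha)⟩
    have heq := pth_eq hG _ hcp
    have hlz : (pth hG u z).length = G.dist u z := (dist_eq hG u z).symm
    rw [← heq, SimpleGraph.Walk.concat_eq_append, SimpleGraph.Walk.getVert_append, hlz]
    rw [if_neg (by omega)]
    rw [show G.dist u y - 1 - G.dist u z = 0 from by omega]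
    simp
  rw [← key x h1 hd1, ← key x' h2 hd2]

/-- A vertex is on the path from `u` to `v` iff the triangle inequality is tight. -/
lemma onSpine_iff (hG : G.IsTree) (u v x : V) :
    G.dist u x + G.dist x v = G.dist u v ↔ x ∈ (pth hG u v).support := by
  constructor
  · intro h
    have hpath : ((pth hG u x).append (pth hG x v)).IsPath := by
      rw [SimpleGraph.Walk.isPath_def, SimpleGraph.Walk.support_append, List.nodup_append]
      refine ⟨(pth_isPath hG u x).support_nodup,
        ((pth_isPath hG x v).support_nodup).tail, ?_⟩
      intro y hy1 b hy2 hyb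
      rw [← hyb] at hy2
      have hy2' : y ∈ (pth hG x v).support := List.mem_of_mem_tail hy2
      have hs1 := mem_support_sum hG hy1
      have hs2 := mem_support_sum hG hy2'
      have htri : G.dist u v ≤ G.dist u y + G.dist y v := hG.isConnected.dist_triangle
      have hc : G.dist y x = G.dist x y := SimpleGraph.dist_comm
      have hz : G.dist x y = 0 := by omega
      have hyx : y = x := ((hG.isConnected.dist_eq_zero_iff).mp hz).symm
      subst hyx
      have hn := (pth_isPath hG y v).support_nodup
      rw [SimpleGraph.Walk.support_eq_cons] at hn
      exact (List.nodup_cons.mp hn).1 hy2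
    have heq := pth_eq hG _ hpath
    rw [← heq]
    exact (SimpleGraph.Walk.mem_support_append_iff _ _).mpr
      (Or.inl (SimpleGraph.Walk.end_mem_support _))
  · exact fun h => mem_support_sum hG h

lemma getVert_one_eq (hG : G.IsTree) {x z y : V} (hy : y ∈ (pth hG x z).support)
    (hxy : y ≠ x) : (pth hG x y).getVert 1 = (pth hG x z).getVert 1 := by
  classical
  have ht : ((pth hG x z).takeUntil y hy).IsPath := (pth_isPath hG x z).takeUntil hy
  have hteq := pth_eq hG _ ht
  have hlen : ((pth hG x z).takeUntil y hy).length ≠ 0 := by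
    intro h0
    exact hxy (SimpleGraph.Walk.eq_of_length_eq_zero h0).symm
  have hspec := SimpleGraph.Walk.take_spec (pth hG x z) hy
  rw [← hteq]
  conv_rhs => rw [← hspec]
  rw [SimpleGraph.Walk.getVert_append]
  by_cases h1 : 1 < ((pth hG x z).takeUntil y hy).length
  · rw [if_pos h1]
  · have h1' : ((pth hG x z).takeUntil y hy).length = 1 := by omega
    rw [if_neg h1, SimpleGraph.Walk.getVert_of_length_le _ (le_of_eq h1'), h1']
    simp

/-- Off the spine, the first steps toward `u` and toward `v` coincide. -/
lemma off_getVert_one (hG : G.IsTree) {u v x : V}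
    (h : G.dist u x + G.dist x v ≠ G.dist u v) :
    (pth hG x u).getVert 1 = (pth hG x v).getVert 1 := by
  classical
  by_contra hne
  apply h
  have hnd1 : ((pth hG x u).reverse).support.Nodup := by
    rw [SimpleGraph.Walk.support_reverse]
    exact List.nodup_reverse.mpr (pth_isPath hG x u).support_nodup
  have hpath : (((pth hG x u).reverse).append (pth hG x v)).IsPath := by
    rw [SimpleGraph.Walk.isPath_def, SimpleGraph.Walk.support_append, List.nodup_append]
    refine ⟨hnd1, ((pth_isPath hG x v).support_nodup).tail, ?_⟩
    intro y hy1 b hy2 hyb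
    rw [← hyb] at hy2
    rw [SimpleGraph.Walk.support_reverse, List.mem_reverse] at hy1
    have hy2' : y ∈ (pth hG x v).support := List.mem_of_mem_tail hy2
    have hyx : y ≠ x := by
      intro hc
      subst hc
      have hn := (pth_isPath hG y v).support_nodup
      rw [SimpleGraph.Walk.support_eq_cons] at hn
      exact (List.nodup_cons.mp hn).1 hy2
    exact hne (by rw [← getVert_one_eq hG hy1 hyx, getVert_one_eq hG hy2' hyx])
  have heq := pth_eq hG _ hpath
  have hmem : x ∈ ((((pth hG x u).reverse).append (pth hG x v))).support :=
    (SimpleGraph.Walk.mem_support_append_iff _ _).mpr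
      (Or.inl (SimpleGraph.Walk.end_mem_support _))
  rw [heq] at hmem
  exact mem_support_sum hG hmem

/-- The parent (first step toward `v`) of a vertex. -/
noncomputable def par (hG : G.IsTree) (v x : V) : V := (pth hG x v).getVert 1

lemma par_spec (hG : G.IsTree) {u v x : V}
    (hx : G.dist u x + G.dist x v ≠ G.dist u v) :
    G.Adj x (par hG v x) ∧ G.dist u (par hG v x) + 1 = G.dist u x ∧
      G.dist (par hG v x) v + 1 = G.dist x v := by
  have hxu : x ≠ u := by
    rintro rfl
    rw [SimpleGraph.dist_self] at hx
    omega
  have hxv : x ≠ v := by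
    rintro rfl
    rw [SimpleGraph.dist_self] at hx
    rw [SimpleGraph.dist_comm] at hx
    omega
  have hlu : (pth hG x u).length = G.dist x u := (dist_eq hG x u).symm
  have hlv : (pth hG x v).length = G.dist x v := (dist_eq hG x v).symm
  have hpu : 0 < (pth hG x u).length := by
    rw [hlu]; exact hG.isConnected.pos_dist_of_ne hxu
  have hpv : 0 < (pth hG x v).length := by
    rw [hlv]; exact hG.isConnected.pos_dist_of_ne hxv
  have hadj : G.Adj x ((pth hG x v).getVert 1) := by
    have := (pth hG x v).adj_getVert_succ (i := 0) hpv
    simpa using this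
  have hoff := off_getVert_one hG hx
  refine ⟨hadj, ?_, ?_⟩
  · show G.dist u ((pth hG x v).getVert 1) + 1 = G.dist u x
    rw [← hoff]
    have h2 := (dist_getVert hG (x := x) (y := u) (i := 1) (by omega)).2
    have hc1 : G.dist u ((pth hG x u).getVert 1)
        = G.dist ((pth hG x u).getVert 1) u := SimpleGraph.dist_comm
    have hc2 : G.dist u x = G.dist x u := SimpleGraph.dist_comm
    omega
  · show G.dist ((pth hG x v).getVert 1) v + 1 = G.dist x v
    have h3 := (dist_getVert hG (x := x) (y := v) (i := 1) (by omega)).2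
    omega

/-! ### Building a bigclaw from a vertex at distance 2 from the spine -/

set_option maxHeartbeats 2000000 in
lemma bigclaw_of (hG : G.IsTree) {u v x y z : V}
    (hmax : ∀ p q : V, G.dist p q ≤ G.dist u v)
    (hzs : G.dist u z + G.dist z v = G.dist u v)
    (hyz : G.Adj y z) (hxy : G.Adj x y)
    (hay : G.dist u y = G.dist u z + 1) (hby : G.dist y v = G.dist z v + 1)
    (hax : G.dist u x = G.dist u y + 1) (hbx : G.dist x v = G.dist y v + 1) :
    Nonempty (bigclaw ↪g G) := by
  have hlen : (pth hG u v).length = G.dist u v := (dist_eq hG u v).symm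
  have hmux : G.dist u x ≤ G.dist u v := hmax u x
  have hmxv : G.dist x v ≤ G.dist u v := hmax x v
  obtain ⟨r, hr⟩ : ∃ r, G.dist u z = r + 2 := ⟨G.dist u z - 2, by omega⟩
  have hr4 : r + 4 ≤ G.dist u v := by omega
  have hzmem : z ∈ (pth hG u v).support := (onSpine_iff hG u v z).mp hzs
  obtain ⟨i, hgi, hile⟩ := SimpleGraph.Walk.mem_support_iff_exists_getVert.mp hzmem
  have hiz : i = r + 2 := by
    have h0 := (dist_getVert hG (x := u) (y := v) hile).1
    rw [hgi] at h0
    omega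
  subst hiz
  obtain ⟨P2, hP2⟩ : ∃ w, w = (pth hG u v).getVert r := ⟨_, rfl⟩
  obtain ⟨P1, hP1⟩ : ∃ w, w = (pth hG u v).getVert (r+1) := ⟨_, rfl⟩
  obtain ⟨Q1, hQ1⟩ : ∃ w, w = (pth hG u v).getVert (r+3) := ⟨_, rfl⟩
  obtain ⟨Q2, hQ2⟩ : ∃ w, w = (pth hG u v).getVert (r+4) := ⟨_, rfl⟩
  have hvP2 := dist_getVert hG (x := u) (y := v) (i := r) (by omega)
  have hvP1 := dist_getVert hG (x := u) (y := v) (i := r+1) (by omega)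
  have hvQ1 := dist_getVert hG (x := u) (y := v) (i := r+3) (by omega)
  have hvQ2 := dist_getVert hG (x := u) (y := v) (i := r+4) (by omega)
  rw [← hP2] at hvP2
  rw [← hP1] at hvP1
  rw [← hQ1] at hvQ1
  rw [← hQ2] at hvQ2
  obtain ⟨haP2, hbP2⟩ := hvP2
  obtain ⟨haP1, hbP1⟩ := hvP1
  obtain ⟨haQ1, hbQ1⟩ := hvQ1
  obtain ⟨haQ2, hbQ2⟩ := hvQ2
  rw [hlen] at hbP2 hbP1 hbQ1 hbQ2
  have hbz : G.dist z v + (r + 2) = G.dist u v := by omega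
  have e1 : G.Adj P2 P1 := by
    rw [hP2, hP1]
    have h := (pth hG u v).adj_getVert_succ (i := r) (by omega)
    rwa [show r + 1 = r + 1 from rfl] at h
  have e2 : G.Adj P1 z := by
    have h := (pth hG u v).adj_getVert_succ (i := r+1) (by omega)
    rw [show r + 1 + 1 = r + 2 from by omega, hgi] at h
    rwa [hP1]
  have e3 : G.Adj z Q1 := by
    have h := (pth hG u v).adj_getVert_succ (i := r+2) (by omega)
    rw [show r + 2 + 1 = r + 3 from by omega, hgi] at h
    rwa [hQ1]
  have e4 : G.Adj Q1 Q2 := by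
    have h := (pth hG u v).adj_getVert_succ (i := r+3) (by omega)
    rw [show r + 3 + 1 = r + 4 from by omega] at h
    rw [hQ1, hQ2]
    exact h
  have nadj_far : ∀ w1 w2 : V, G.dist u w1 + 2 ≤ G.dist u w2 → ¬ G.Adj w1 w2 := by
    intro w1 w2 hd hadj
    rcases adj_dist_succ hG u hadj with hc | hc <;> omega
  have nadj_eq : ∀ w1 w2 : V, G.dist u w1 = G.dist u w2 → ¬ G.Adj w1 w2 :=
    fun w1 w2 hd hadj => adj_dist_ne hG u hadj hd
  have n1 : ¬ G.Adj P2 z := nadj_far _ _ (by omega)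
  have n2 : ¬ G.Adj z Q2 := nadj_far _ _ (by omega)
  have n3 : ¬ G.Adj z x := nadj_far _ _ (by omega)
  have n4 : ¬ G.Adj P1 Q1 := nadj_far _ _ (by omega)
  have n5 : ¬ G.Adj P1 Q2 := nadj_far _ _ (by omega)
  have n6 : ¬ G.Adj P1 y := nadj_far _ _ (by omega)
  have n7 : ¬ G.Adj P1 x := nadj_far _ _ (by omega)
  have n8 : ¬ G.Adj P2 Q1 := nadj_far _ _ (by omega)
  have n9 : ¬ G.Adj P2 Q2 := nadj_far _ _ (by omega)
  have n10 : ¬ G.Adj P2 y := nadj_far _ _ (by omega)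
  have n11 : ¬ G.Adj P2 x := nadj_far _ _ (by omega)
  have n12 : ¬ G.Adj Q1 y := nadj_eq _ _ (by omega)
  have n13 : ¬ G.Adj Q2 x := nadj_eq _ _ (by omega)
  have n14 : ¬ G.Adj Q1 x := by
    intro hadj
    have hQ1y : Q1 = y := upar_unique hG (u := u) hadj hxy.symm (by omega) (by omega)
    rw [hQ1y] at hbQ1
    omega
  have n15 : ¬ G.Adj Q2 y := by
    intro hadj
    have hyQ1 : y = Q1 := upar_unique hG (u := u) hadj.symm e4 (by omega) (by omega)
    rw [hyQ1] at hby
    have := hbQ1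
    omega
  have n1' : ¬ G.Adj z P2 := fun hc => n1 hc.symm
  have n2' : ¬ G.Adj Q2 z := fun hc => n2 hc.symm
  have n3' : ¬ G.Adj x z := fun hc => n3 hc.symm
  have n4' : ¬ G.Adj Q1 P1 := fun hc => n4 hc.symm
  have n5' : ¬ G.Adj Q2 P1 := fun hc => n5 hc.symm
  have n6' : ¬ G.Adj y P1 := fun hc => n6 hc.symm
  have n7' : ¬ G.Adj x P1 := fun hc => n7 hc.symm
  have n8' : ¬ G.Adj Q1 P2 := fun hc => n8 hc.symm
  have n9' : ¬ G.Adj Q2 P2 := fun hc => n9 hc.symm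
  have n10' : ¬ G.Adj y P2 := fun hc => n10 hc.symm
  have n11' : ¬ G.Adj x P2 := fun hc => n11 hc.symm
  have n12' : ¬ G.Adj y Q1 := fun hc => n12 hc.symm
  have n13' : ¬ G.Adj x Q2 := fun hc => n13 hc.symm
  have n14' : ¬ G.Adj x Q1 := fun hc => n14 hc.symm
  have n15' : ¬ G.Adj y Q2 := fun hc => n15 hc.symm
  have p01 : G.Adj z P1 := e2.symm
  have p10 : G.Adj P1 z := e2
  have p02 : G.Adj z Q1 := e3
  have p20 : G.Adj Q1 z := e3.symm
  have p03 : G.Adj z y := hyz.symm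
  have p30 : G.Adj y z := hyz
  have p14 : G.Adj P1 P2 := e1.symm
  have p41 : G.Adj P2 P1 := e1
  have p25 : G.Adj Q1 Q2 := e4
  have p52 : G.Adj Q2 Q1 := e4.symm
  have p36 : G.Adj y x := hxy.symm
  have p63 : G.Adj x y := hxy
  have d01 : z ≠ P1 := by
    intro hc
    have h1 := congrArg (G.dist u) hc
    have h2 := congrArg (fun w => G.dist u w + G.dist w v) hc
    omega
  have d02 : z ≠ Q1 := by
    intro hc
    have h1 := congrArg (G.dist u) hc
    have h2 := congrArg (fun w => G.dist u w + G.dist w v) hc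
    omega
  have d03 : z ≠ y := by
    intro hc
    have h1 := congrArg (G.dist u) hc
    have h2 := congrArg (fun w => G.dist u w + G.dist w v) hc
    omega
  have d04 : z ≠ P2 := by
    intro hc
    have h1 := congrArg (G.dist u) hc
    have h2 := congrArg (fun w => G.dist u w + G.dist w v) hc
    omega
  have d05 : z ≠ Q2 := by
    intro hc
    have h1 := congrArg (G.dist u) hc
    have h2 := congrArg (fun w => G.dist u w + G.dist w v) hc
    omega
  have d06 : z ≠ x := by
    intro hc
    have h1 := congrArg (G.dist u) hc
    have h2 := congrArg (fun w => G.dist u w + G.dist w v) hc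
    omega
  have d12 : P1 ≠ Q1 := by
    intro hc
    have h1 := congrArg (G.dist u) hc
    have h2 := congrArg (fun w => G.dist u w + G.dist w v) hc
    omega
  have d13 : P1 ≠ y := by
    intro hc
    have h1 := congrArg (G.dist u) hc
    have h2 := congrArg (fun w => G.dist u w + G.dist w v) hc
    omega
  have d14 : P1 ≠ P2 := by
    intro hc
    have h1 := congrArg (G.dist u) hc
    have h2 := congrArg (fun w => G.dist u w + G.dist w v) hc
    omega
  have d15 : P1 ≠ Q2 := by
    intro hc
    have h1 := congrArg (G.dist u) hc
    have h2 := congrArg (fun w => G.dist u w + G.dist w v) hc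
    omega
  have d16 : P1 ≠ x := by
    intro hc
    have h1 := congrArg (G.dist u) hc
    have h2 := congrArg (fun w => G.dist u w + G.dist w v) hc
    omega
  have d23 : Q1 ≠ y := by
    intro hc
    have h1 := congrArg (G.dist u) hc
    have h2 := congrArg (fun w => G.dist u w + G.dist w v) hc
    omega
  have d24 : Q1 ≠ P2 := by
    intro hc
    have h1 := congrArg (G.dist u) hc
    have h2 := congrArg (fun w => G.dist u w + G.dist w v) hc
    omega
  have d25 : Q1 ≠ Q2 := by
    intro hc
    have h1 := congrArg (G.dist u) hc
    have h2 := congrArg (fun w => G.dist u w + G.dist w v) hc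
    omega
  have d26 : Q1 ≠ x := by
    intro hc
    have h1 := congrArg (G.dist u) hc
    have h2 := congrArg (fun w => G.dist u w + G.dist w v) hc
    omega
  have d34 : y ≠ P2 := by
    intro hc
    have h1 := congrArg (G.dist u) hc
    have h2 := congrArg (fun w => G.dist u w + G.dist w v) hc
    omega
  have d35 : y ≠ Q2 := by
    intro hc
    have h1 := congrArg (G.dist u) hc
    have h2 := congrArg (fun w => G.dist u w + G.dist w v) hc
    omega
  have d36 : y ≠ x := by
    intro hc
    have h1 := congrArg (G.dist u) hc
    have h2 := congrArg (fun w => G.dist u w + G.dist w v) hc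
    omega
  have d45 : P2 ≠ Q2 := by
    intro hc
    have h1 := congrArg (G.dist u) hc
    have h2 := congrArg (fun w => G.dist u w + G.dist w v) hc
    omega
  have d46 : P2 ≠ x := by
    intro hc
    have h1 := congrArg (G.dist u) hc
    have h2 := congrArg (fun w => G.dist u w + G.dist w v) hc
    omega
  have d56 : Q2 ≠ x := by
    intro hc
    have h1 := congrArg (G.dist u) hc
    have h2 := congrArg (fun w => G.dist u w + G.dist w v) hc
    omega
  have hinj : Function.Injective (![z, P1, Q1, y, P2, Q2, x] : Fin 7 → V) := by
    intro i1 i2 heq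
    fin_cases i1 <;> fin_cases i2
    · rfl
    · exact absurd heq d01
    · exact absurd heq d02
    · exact absurd heq d03
    · exact absurd heq d04
    · exact absurd heq d05
    · exact absurd heq d06
    · exact absurd heq (Ne.symm d01)
    · rfl
    · exact absurd heq d12
    · exact absurd heq d13
    · exact absurd heq d14
    · exact absurd heq d15
    · exact absurd heq d16
    · exact absurd heq (Ne.symm d02)
    · exact absurd heq (Ne.symm d12)
    · rfl
    · exact absurd heq d23
    · exact absurd heq d24
    · exact absurd heq d25
    · exact absurd heq d26
    · exact absurd heq (Ne.symm d03)
    · exact absurd heq (Ne.symm d13)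
    · exact absurd heq (Ne.symm d23)
    · rfl
    · exact absurd heq d34
    · exact absurd heq d35
    · exact absurd heq d36
    · exact absurd heq (Ne.symm d04)
    · exact absurd heq (Ne.symm d14)
    · exact absurd heq (Ne.symm d24)
    · exact absurd heq (Ne.symm d34)
    · rfl
    · exact absurd heq d45
    · exact absurd heq d46
    · exact absurd heq (Ne.symm d05)
    · exact absurd heq (Ne.symm d15)
    · exact absurd heq (Ne.symm d25)
    · exact absurd heq (Ne.symm d35)
    · exact absurd heq (Ne.symm d45)
    · rfl
    · exact absurd heq d56
    · exact absurd heq (Ne.symm d06)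
    · exact absurd heq (Ne.symm d16)
    · exact absurd heq (Ne.symm d26)
    · exact absurd heq (Ne.symm d36)
    · exact absurd heq (Ne.symm d46)
    · exact absurd heq (Ne.symm d56)
    · rfl
  have hiff : ∀ a b : Fin 7, G.Adj ((![z, P1, Q1, y, P2, Q2, x] : Fin 7 → V) a) ((![z, P1, Q1, y, P2, Q2, x] : Fin 7 → V) b) ↔ bigclaw.Adj a b := by
    intro a b
    fin_cases a <;> fin_cases b
    · exact iff_of_false (G.loopless.irrefl _) (by simp [bigclaw, SimpleGraph.fromEdgeSet_adj])
    · exact iff_of_true p01 (by simp [bigclaw, SimpleGraph.fromEdgeSet_adj])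
    · exact iff_of_true p02 (by simp [bigclaw, SimpleGraph.fromEdgeSet_adj])
    · exact iff_of_true p03 (by simp [bigclaw, SimpleGraph.fromEdgeSet_adj])
    · exact iff_of_false n1' (by simp [bigclaw, SimpleGraph.fromEdgeSet_adj])
    · exact iff_of_false n2 (by simp [bigclaw, SimpleGraph.fromEdgeSet_adj])
    · exact iff_of_false n3 (by simp [bigclaw, SimpleGraph.fromEdgeSet_adj])
    · exact iff_of_true p10 (by simp [bigclaw, SimpleGraph.fromEdgeSet_adj])
    · exact iff_of_false (G.loopless.irrefl _) (by simp [bigclaw, SimpleGraph.fromEdgeSet_adj])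
    · exact iff_of_false n4 (by simp [bigclaw, SimpleGraph.fromEdgeSet_adj])
    · exact iff_of_false n6 (by simp [bigclaw, SimpleGraph.fromEdgeSet_adj])
    · exact iff_of_true p14 (by simp [bigclaw, SimpleGraph.fromEdgeSet_adj])
    · exact iff_of_false n5 (by simp [bigclaw, SimpleGraph.fromEdgeSet_adj])
    · exact iff_of_false n7 (by simp [bigclaw, SimpleGraph.fromEdgeSet_adj])
    · exact iff_of_true p20 (by simp [bigclaw, SimpleGraph.fromEdgeSet_adj])
    · exact iff_of_false n4' (by simp [bigclaw, SimpleGraph.fromEdgeSet_adj])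
    · exact iff_of_false (G.loopless.irrefl _) (by simp [bigclaw, SimpleGraph.fromEdgeSet_adj])
    · exact iff_of_false n12 (by simp [bigclaw, SimpleGraph.fromEdgeSet_adj])
    · exact iff_of_false n8' (by simp [bigclaw, SimpleGraph.fromEdgeSet_adj])
    · exact iff_of_true p25 (by simp [bigclaw, SimpleGraph.fromEdgeSet_adj])
    · exact iff_of_false n14 (by simp [bigclaw, SimpleGraph.fromEdgeSet_adj])
    · exact iff_of_true p30 (by simp [bigclaw, SimpleGraph.fromEdgeSet_adj])
    · exact iff_of_false n6' (by simp [bigclaw, SimpleGraph.fromEdgeSet_adj])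
    · exact iff_of_false n12' (by simp [bigclaw, SimpleGraph.fromEdgeSet_adj])
    · exact iff_of_false (G.loopless.irrefl _) (by simp [bigclaw, SimpleGraph.fromEdgeSet_adj])
    · exact iff_of_false n10' (by simp [bigclaw, SimpleGraph.fromEdgeSet_adj])
    · exact iff_of_false n15' (by simp [bigclaw, SimpleGraph.fromEdgeSet_adj])
    · exact iff_of_true p36 (by simp [bigclaw, SimpleGraph.fromEdgeSet_adj])
    · exact iff_of_false n1 (by simp [bigclaw, SimpleGraph.fromEdgeSet_adj])
    · exact iff_of_true p41 (by simp [bigclaw, SimpleGraph.fromEdgeSet_adj])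
    · exact iff_of_false n8 (by simp [bigclaw, SimpleGraph.fromEdgeSet_adj])
    · exact iff_of_false n10 (by simp [bigclaw, SimpleGraph.fromEdgeSet_adj])
    · exact iff_of_false (G.loopless.irrefl _) (by simp [bigclaw, SimpleGraph.fromEdgeSet_adj])
    · exact iff_of_false n9 (by simp [bigclaw, SimpleGraph.fromEdgeSet_adj])
    · exact iff_of_false n11 (by simp [bigclaw, SimpleGraph.fromEdgeSet_adj])
    · exact iff_of_false n2' (by simp [bigclaw, SimpleGraph.fromEdgeSet_adj])
    · exact iff_of_false n5' (by simp [bigclaw, SimpleGraph.fromEdgeSet_adj])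
    · exact iff_of_true p52 (by simp [bigclaw, SimpleGraph.fromEdgeSet_adj])
    · exact iff_of_false n15 (by simp [bigclaw, SimpleGraph.fromEdgeSet_adj])
    · exact iff_of_false n9' (by simp [bigclaw, SimpleGraph.fromEdgeSet_adj])
    · exact iff_of_false (G.loopless.irrefl _) (by simp [bigclaw, SimpleGraph.fromEdgeSet_adj])
    · exact iff_of_false n13 (by simp [bigclaw, SimpleGraph.fromEdgeSet_adj])
    · exact iff_of_false n3' (by simp [bigclaw, SimpleGraph.fromEdgeSet_adj])
    · exact iff_of_false n7' (by simp [bigclaw, SimpleGraph.fromEdgeSet_adj])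
    · exact iff_of_false n14' (by simp [bigclaw, SimpleGraph.fromEdgeSet_adj])
    · exact iff_of_true p63 (by simp [bigclaw, SimpleGraph.fromEdgeSet_adj])
    · exact iff_of_false n11' (by simp [bigclaw, SimpleGraph.fromEdgeSet_adj])
    · exact iff_of_false n13' (by simp [bigclaw, SimpleGraph.fromEdgeSet_adj])
    · exact iff_of_false (G.loopless.irrefl _) (by simp [bigclaw, SimpleGraph.fromEdgeSet_adj])
  exact ⟨⟨⟨(![z, P1, Q1, y, P2, Q2, x] : Fin 7 → V), hinj⟩, fun {a b} => hiff a b⟩⟩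

/-- Structure theorem: in a bigclaw-free tree with `u v` a diametral pair, every
vertex is on the spine or adjacent to a spine vertex. -/
lemma struct (hG : G.IsTree) (hfree : IsEmpty (bigclaw ↪g G)) {u v : V}
    (hmax : ∀ x y : V, G.dist x y ≤ G.dist u v) (x : V) :
    G.dist u x + G.dist x v = G.dist u v ∨
      (G.dist u x + G.dist x v = G.dist u v + 2 ∧
       G.Adj x (par hG v x) ∧
       G.dist u (par hG v x) + 1 = G.dist u x ∧
       G.dist u (par hG v x) + G.dist (par hG v x) v = G.dist u v) := by
  suffices H : ∀ (n : ℕ) (w : V), G.dist u w = n →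
      (G.dist u w + G.dist w v = G.dist u v ∨
       (G.dist u w + G.dist w v = G.dist u v + 2 ∧
        G.Adj w (par hG v w) ∧
        G.dist u (par hG v w) + 1 = G.dist u w ∧
        G.dist u (par hG v w) + G.dist (par hG v w) v = G.dist u v)) by
    exact H _ x rfl
  intro n
  induction n using Nat.strong_induction_on with
  | _ n ih =>
    intro w hwn
    by_cases hsp : G.dist u w + G.dist w v = G.dist u v
    · exact Or.inl hsp
    obtain ⟨hadj, hau, hbv⟩ := par_spec hG (u := u) hsp
    have htri_y : G.dist u v ≤ G.dist u (par hG v w) + G.dist (par hG v w) v :=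
      hG.isConnected.dist_triangle
    have htri_x : G.dist u v ≤ G.dist u w + G.dist w v :=
      hG.isConnected.dist_triangle
    by_cases hys : G.dist u (par hG v w) + G.dist (par hG v w) v = G.dist u v
    · exact Or.inr ⟨by omega, hadj, hau, hys⟩
    · obtain ⟨hadj2, hau2, hbv2⟩ := par_spec hG (u := u) hys
      have hcase := ih (G.dist u (par hG v w)) (by omega) (par hG v w) rfl
      rcases hcase with hl | ⟨hsum, _, hau3, hzs⟩
      · exact absurd hl hys
      · exfalso
        obtain ⟨e⟩ := bigclaw_of hG hmax hzs hadj2 hadj (by omega) (by omega)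
          (by omega) (by omega)
        exact hfree.false e

/-! ### Sorting an injective ℕ-valued function into an order-equivalence -/

lemma sort_lemma {W : Type*} [Fintype W] (φ : W → ℕ) (hφ : Function.Injective φ) :
    ∃ σ : W ≃ Fin (Fintype.card W), ∀ x y : W, σ x < σ y ↔ φ x < φ y := by
  classical
  have hcard : (Finset.univ.image φ).card = Fintype.card W := by
    rw [Finset.card_image_of_injective _ hφ, Finset.card_univ]
  let e := (Finset.univ.image φ).orderIsoOfFin hcard
  let g : W → Fin (Fintype.card W) := fun x => e.symm ⟨φ x, by simp⟩
  have hg : ∀ x y : W, g x < g y ↔ φ x < φ y := by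
    intro x y
    show e.symm _ < e.symm _ ↔ _
    rw [OrderIso.lt_iff_lt]
    exact Subtype.mk_lt_mk
  have hginj : Function.Injective g := by
    intro x y hxy
    by_contra hne
    have hphi : φ x ≠ φ y := fun hc => hne (hφ hc)
    rcases hphi.lt_or_gt with hc | hc
    · exact absurd hxy (ne_of_lt ((hg x y).mpr hc))
    · exact absurd hxy.symm (ne_of_lt ((hg y x).mpr hc))
  have hbij : Function.Bijective g :=
    (Fintype.bijective_iff_injective_and_card g).mpr ⟨hginj, by simp⟩
  exact ⟨Equiv.ofBijective g hbij, hg⟩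

lemma base_lt {n p q r s : ℕ} (hr : r < n) (hs : s < n) :
    p * n + r < q * n + s ↔ p < q ∨ (p = q ∧ r < s) := by
  constructor
  · intro h
    rcases lt_trichotomy p q with hpq | hpq | hpq
    · exact Or.inl hpq
    · subst hpq
      exact Or.inr ⟨rfl, Nat.lt_of_add_lt_add_left h⟩
    · exfalso
      have hchain : p * n + r < p * n + r := by
        calc p * n + r < q * n + s + 1 := by omega
          _ ≤ q * n + n := by omega
          _ = (q + 1) * n := (Nat.succ_mul q n).symm
          _ ≤ p * n := Nat.mul_le_mul_right n hpq
          _ ≤ p * n + r := Nat.le_add_right _ _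
      exact lt_irrefl _ hchain
  · rintro (hpq | ⟨rfl, hrs⟩)
    · calc p * n + r < p * n + n := Nat.add_lt_add_left hr _
        _ = (p + 1) * n := (Nat.succ_mul p n).symm
        _ ≤ q * n := Nat.mul_le_mul_right n hpq
        _ ≤ q * n + s := Nat.le_add_right _ _
    · exact Nat.add_lt_add_left hrs _

/-! ### Weakly closed graphs contain no bigclaw -/

lemma not_wc_of_emb {W : Type*} [Fintype W] {H : SimpleGraph W} (f : bigclaw ↪g H) :
    ¬ WeaklyClosed H := by
  rintro ⟨σ, h⟩
  have hadj : ∀ a b : Fin 7, H.Adj (f a) (f b) ↔ bigclaw.Adj a b :=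
    fun a b => f.map_adj_iff
  have hfi : Function.Injective f := f.injective
  have hsig : ∀ a b : Fin 7, σ (f a) = σ (f b) → a = b :=
    fun a b hc => hfi (σ.injective hc)
  set A : Fin 3 → Fin 7 := ![1, 2, 3] with hA
  set B : Fin 3 → Fin 7 := ![4, 5, 6] with hB
  have hAB : ∀ i : Fin 3, bigclaw.Adj (A i) (B i) := by
    intro i
    fin_cases i <;> simp [hA, hB, bigclaw, SimpleGraph.fromEdgeSet_adj]
  have hCA : ∀ i : Fin 3, bigclaw.Adj 0 (A i) := by
    intro i
    fin_cases i <;> simp [hA, bigclaw, SimpleGraph.fromEdgeSet_adj]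
  have hnCB : ∀ i : Fin 3, ¬ bigclaw.Adj 0 (B i) := by
    intro i
    fin_cases i <;> simp [hB, bigclaw, SimpleGraph.fromEdgeSet_adj]
  have hnBB : ∀ i j : Fin 3, ¬ bigclaw.Adj (B i) (B j) := by
    intro i j
    fin_cases i <;> fin_cases j <;> simp [hB, bigclaw, SimpleGraph.fromEdgeSet_adj]
  have hnAB : ∀ i j : Fin 3, i ≠ j → ¬ bigclaw.Adj (A j) (B i) := by
    intro i j hij
    fin_cases i <;> fin_cases j <;>
      first
        | (exact absurd rfl hij)
        | (simp [hA, hB, bigclaw, SimpleGraph.fromEdgeSet_adj])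
  have hAne0 : ∀ i : Fin 3, A i ≠ 0 := by intro i; fin_cases i <;> decide
  have hBne0 : ∀ i : Fin 3, B i ≠ 0 := by intro i; fin_cases i <;> decide
  have hABne : ∀ i j : Fin 3, A i ≠ B j := by
    intro i j; fin_cases i <;> fin_cases j <;> decide
  have hBBne : ∀ i j : Fin 3, i ≠ j → B i ≠ B j := by
    intro i j hij
    fin_cases i <;> fin_cases j <;> first | (exact absurd rfl hij) | decide
  have core : ∀ i j : Fin 3, i ≠ j →
      ((σ (f 0) < σ (f (B i)) ∧ σ (f (B i)) < σ (f (B j))) ∨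
       (σ (f (B j)) < σ (f (B i)) ∧ σ (f (B i)) < σ (f 0))) → False := by
    intro i j hij hcase
    have haux1 : ¬ H.Adj (f (A j)) (f (B i)) := fun hc => hnAB i j hij ((hadj _ _).mp hc)
    have haux2 : ¬ H.Adj (f (B i)) (f (A j)) := fun hc => haux1 hc.symm
    have haux3 : ¬ H.Adj (f 0) (f (B i)) := fun hc => hnCB i ((hadj _ _).mp hc)
    have haux4 : ¬ H.Adj (f (B i)) (f 0) := fun hc => haux3 hc.symm
    have haux5 : ¬ H.Adj (f (B i)) (f (B j)) := fun hc => hnBB i j ((hadj _ _).mp hc)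
    have haux6 : ¬ H.Adj (f (B j)) (f (B i)) := fun hc => haux5 hc.symm
    have hAjBj : H.Adj (f (A j)) (f (B j)) := (hadj _ _).mpr (hAB j)
    have hCAj : H.Adj (f 0) (f (A j)) := (hadj _ _).mpr (hCA j)
    rcases hcase with ⟨h1, h2⟩ | ⟨h1, h2⟩
    · rcases lt_trichotomy (σ (f (A j))) (σ (f 0)) with hc | hc | hc
      · rcases h (f (A j)) (f (B j)) (f (B i)) hAjBj (lt_trans hc h1) h2 with hx | hx
        · exact haux1 hx
        · exact haux5 hx
      · exact hAne0 j (hsig _ _ hc)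
      · rcases lt_trichotomy (σ (f (B i))) (σ (f (A j))) with hd | hd | hd
        · rcases h (f 0) (f (A j)) (f (B i)) hCAj h1 hd with hx | hx
          · exact haux3 hx
          · exact haux2 hx
        · exact hABne j i (hsig _ _ hd.symm)
        · rcases h (f (A j)) (f (B j)) (f (B i)) hAjBj hd h2 with hx | hx
          · exact haux1 hx
          · exact haux5 hx
    · rcases lt_trichotomy (σ (f 0)) (σ (f (A j))) with hc | hc | hc
      · rcases h (f (B j)) (f (A j)) (f (B i)) hAjBj.symm h1 (lt_trans h2 hc) with hx | hx
        · exact haux6 hx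
        · exact haux2 hx
      · exact hAne0 j (hsig _ _ hc.symm)
      · rcases lt_trichotomy (σ (f (A j))) (σ (f (B i))) with hd | hd | hd
        · rcases h (f (A j)) (f 0) (f (B i)) hCAj.symm hd h2 with hx | hx
          · exact haux1 hx
          · exact haux4 hx
        · exact hABne j i (hsig _ _ hd)
        · rcases h (f (B j)) (f (A j)) (f (B i)) hAjBj.symm h1 hd with hx | hx
          · exact haux6 hx
          · exact haux2 hx
  have pick : ∀ i j : Fin 3, i ≠ j →
      ((σ (f 0) < σ (f (B i)) ∧ σ (f 0) < σ (f (B j))) ∨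
       (σ (f (B i)) < σ (f 0) ∧ σ (f (B j)) < σ (f 0))) → False := by
    intro i j hij hcase
    rcases hcase with ⟨hi, hj⟩ | ⟨hi, hj⟩
    · rcases lt_trichotomy (σ (f (B i))) (σ (f (B j))) with hd | hd | hd
      · exact core i j hij (Or.inl ⟨hi, hd⟩)
      · exact hBBne i j hij (hsig _ _ hd)
      · exact core j i (Ne.symm hij) (Or.inl ⟨hj, hd⟩)
    · rcases lt_trichotomy (σ (f (B i))) (σ (f (B j))) with hd | hd | hd
      · exact core j i (Ne.symm hij) (Or.inr ⟨hd, hj⟩)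
      · exact hBBne i j hij (hsig _ _ hd)
      · exact core i j hij (Or.inr ⟨hd, hi⟩)
  have hne : ∀ i : Fin 3, σ (f (B i)) ≠ σ (f 0) :=
    fun i hc => hBne0 i (hsig _ _ hc)
  rcases (hne 0).lt_or_gt with h0 | h0 <;>
    rcases (hne 1).lt_or_gt with h1 | h1 <;>
      rcases (hne 2).lt_or_gt with h2 | h2
  · exact pick 0 1 (by decide) (Or.inr ⟨h0, h1⟩)
  · exact pick 0 1 (by decide) (Or.inr ⟨h0, h1⟩)
  · exact pick 0 2 (by decide) (Or.inr ⟨h0, h2⟩)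
  · exact pick 1 2 (by decide) (Or.inl ⟨h1, h2⟩)
  · exact pick 1 2 (by decide) (Or.inr ⟨h1, h2⟩)
  · exact pick 0 2 (by decide) (Or.inl ⟨h0, h2⟩)
  · exact pick 0 1 (by decide) (Or.inl ⟨h0, h1⟩)
  · exact pick 0 1 (by decide) (Or.inl ⟨h0, h1⟩)

/-! ### The weakly closed ordering of a bigclaw-free tree -/

open scoped Classical in
/-- Position of a vertex: spine vertices at even positions `2d`, off-spine vertices
just after their parent. -/
noncomputable def posFn (G : SimpleGraph V) (u v x : V) : ℕ :=
  if G.dist u x + G.dist x v = G.dist u v then 2 * G.dist u x else 2 * G.dist u x - 1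

lemma posFn_spine {u v x : V} (h : G.dist u x + G.dist x v = G.dist u v) :
    posFn G u v x = 2 * G.dist u x := by
  unfold posFn
  rw [if_pos h]

lemma posFn_off {u v x : V} (h : ¬ (G.dist u x + G.dist x v = G.dist u v)) :
    posFn G u v x = 2 * G.dist u x - 1 := by
  unfold posFn
  rw [if_neg h]

noncomputable def phiFn [Fintype V] (G : SimpleGraph V) (u v : V)
    (e0 : V ≃ Fin (Fintype.card V)) (x : V) : ℕ :=
  posFn G u v x * Fintype.card V + (e0 x : ℕ)

lemma phiFn_lt [Fintype V] (u v : V) (e0 : V ≃ Fin (Fintype.card V)) (x y : V) :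
    phiFn G u v e0 x < phiFn G u v e0 y ↔
      (posFn G u v x < posFn G u v y ∨
        (posFn G u v x = posFn G u v y ∧ (e0 x : ℕ) < (e0 y : ℕ))) := by
  unfold phiFn
  exact base_lt (e0 x).isLt (e0 y).isLt

lemma phiFn_inj [Fintype V] (u v : V) (e0 : V ≃ Fin (Fintype.card V)) :
    Function.Injective (phiFn G u v e0) := by
  intro x y hxy
  have h1 : ¬ phiFn G u v e0 x < phiFn G u v e0 y := by rw [hxy]; exact lt_irrefl _
  have h2 : ¬ phiFn G u v e0 y < phiFn G u v e0 x := by rw [hxy]; exact lt_irrefl _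
  rw [phiFn_lt] at h1 h2
  have hval : (e0 x : ℕ) = (e0 y : ℕ) := by omega
  exact e0.injective (Fin.val_injective hval)

end TreeWC

theorem tree_weaklyClosed_iff_bigclaw_free {V : Type*} [Fintype V] (G : SimpleGraph V)
    (hG : G.IsTree) : WeaklyClosed G ↔ IsEmpty (bigclaw ↪g G) := by
  constructor
  · intro hwc
    exact ⟨fun f => TreeWC.not_wc_of_emb f hwc⟩
  · intro hfree
    classical
    haveI hnV : Nonempty V := hG.isConnected.nonempty
    obtain ⟨uv, -, hmaxp⟩ := Finset.exists_max_image (Finset.univ ×ˢ Finset.univ)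
      (fun p : V × V => G.dist p.1 p.2) (Finset.univ_nonempty.product Finset.univ_nonempty)
    obtain ⟨u, v⟩ := uv
    have hmax : ∀ x y : V, G.dist x y ≤ G.dist u v := fun x y => hmaxp (x, y) (by simp)
    obtain ⟨e0⟩ : Nonempty (V ≃ Fin (Fintype.card V)) := ⟨Fintype.equivFin V⟩
    have ST := fun x => TreeWC.struct hG hfree hmax x
    have suniq : ∀ x y : V, G.dist u x + G.dist x v = G.dist u v →
        G.dist u y + G.dist y v = G.dist u v → G.dist u x = G.dist u y → x = y := by
      intro x y hx hy hxy
      obtain ⟨i, hgi, hile⟩ := SimpleGraph.Walk.mem_support_iff_exists_getVert.mp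
        ((TreeWC.onSpine_iff hG u v x).mp hx)
      obtain ⟨j, hgj, hjle⟩ := SimpleGraph.Walk.mem_support_iff_exists_getVert.mp
        ((TreeWC.onSpine_iff hG u v y).mp hy)
      have hi := (TreeWC.dist_getVert hG hile).1
      rw [hgi] at hi
      have hj := (TreeWC.dist_getVert hG hjle).1
      rw [hgj] at hj
      rw [← hgi, ← hgj]
      congr 1
      omega
    have hoffc : ∀ k : V, ¬ (G.dist u k + G.dist k v = G.dist u v) →
        TreeWC.posFn G u v k = 2 * G.dist u k - 1 ∧ 1 ≤ G.dist u k ∧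
        G.Adj k (TreeWC.par hG v k) ∧ G.dist u (TreeWC.par hG v k) + 1 = G.dist u k ∧
        G.dist u (TreeWC.par hG v k) + G.dist (TreeWC.par hG v k) v = G.dist u v := by
      intro k hk
      rcases ST k with hl | ⟨hs1, hs2, hs3, hs4⟩
      · exact absurd hl hk
      · exact ⟨TreeWC.posFn_off hk, by omega, hs2, hs3, hs4⟩
    have edge' : ∀ i j : V, G.Adj i j → G.dist u j = G.dist u i + 1 →
        G.dist u i + G.dist i v = G.dist u v := by
      intro i j hadj hA
      by_cases hj : G.dist u j + G.dist j v = G.dist u v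
      · obtain ⟨t, hgt, htle⟩ := SimpleGraph.Walk.mem_support_iff_exists_getVert.mp
          ((TreeWC.onSpine_iff hG u v j).mp hj)
        have hlen : (TreeWC.pth hG u v).length = G.dist u v := (TreeWC.dist_eq hG u v).symm
        have hta := (TreeWC.dist_getVert hG htle).1
        rw [hgt] at hta
        have ht1 : 1 ≤ t := by omega
        have hw1 := (TreeWC.dist_getVert hG (x := u) (y := v) (i := t-1) (by omega)).1
        have hw2 := (TreeWC.dist_getVert hG (x := u) (y := v) (i := t-1) (by omega)).2
        have hadj2 : G.Adj ((TreeWC.pth hG u v).getVert (t-1)) j := by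
          have h := (TreeWC.pth hG u v).adj_getVert_succ (i := t-1) (by omega)
          rwa [show t - 1 + 1 = t from by omega, hgt] at h
        have hieq : i = (TreeWC.pth hG u v).getVert (t-1) :=
          TreeWC.upar_unique hG (u := u) hadj hadj2 (by omega) (by omega)
        rw [hieq]
        omega
      · obtain ⟨hpj, hj1, hj2, hj3, hj4⟩ := hoffc j hj
        have hieq : i = TreeWC.par hG v j :=
          TreeWC.upar_unique hG (u := u) hadj hj2.symm (by omega) hj3
        rw [hieq]
        omega
    obtain ⟨σ, hσ⟩ := TreeWC.sort_lemma (TreeWC.phiFn G u v e0) (TreeWC.phiFn_inj u v e0)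
    refine ⟨σ, ?_⟩
    intro i j k hadj h1 h2
    rw [hσ, TreeWC.phiFn_lt] at h1 h2
    rcases TreeWC.adj_dist_succ hG u hadj with hA | hA
    · have his : G.dist u i + G.dist i v = G.dist u v := edge' i j hadj hA
      have hpi : TreeWC.posFn G u v i = 2 * G.dist u i := TreeWC.posFn_spine his
      by_cases hjs : G.dist u j + G.dist j v = G.dist u v
      · have hpj : TreeWC.posFn G u v j = 2 * G.dist u j := TreeWC.posFn_spine hjs
        by_cases hks : G.dist u k + G.dist k v = G.dist u v
        · exfalso
          have hpk : TreeWC.posFn G u v k = 2 * G.dist u k := TreeWC.posFn_spine hks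
          rcases (by omega : G.dist u k = G.dist u i ∨ G.dist u k = G.dist u j) with hAk | hAk
          · have hki : k = i := suniq k i hks his hAk
            rw [hki] at h1
            omega
          · have hkj : k = j := suniq k j hks hjs hAk
            rw [hkj] at h2
            omega
        · obtain ⟨hpk, hk1, hk2, hk3, hk4⟩ := hoffc k hks
          have hduk : G.dist u k = G.dist u i + 1 := by omega
          have hpar : TreeWC.par hG v k = i := suniq _ i hk4 his (by omega)
          rw [← hpar]
          exact Or.inl hk2.symm
      · obtain ⟨hpj, hj1, hj2, hj3, hj4⟩ := hoffc j hjs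
        by_cases hks : G.dist u k + G.dist k v = G.dist u v
        · exfalso
          have hpk : TreeWC.posFn G u v k = 2 * G.dist u k := TreeWC.posFn_spine hks
          have hAk : G.dist u k = G.dist u i := by omega
          have hki : k = i := suniq k i hks his hAk
          rw [hki] at h1
          omega
        · obtain ⟨hpk, hk1, hk2, hk3, hk4⟩ := hoffc k hks
          have hduk : G.dist u k = G.dist u i + 1 := by omega
          have hpar : TreeWC.par hG v k = i := suniq _ i hk4 his (by omega)
          rw [← hpar]
          exact Or.inl hk2.symm
    · exfalso
      have hjs : G.dist u j + G.dist j v = G.dist u v := edge' j i hadj.symm hA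
      have hpj : TreeWC.posFn G u v j = 2 * G.dist u j := TreeWC.posFn_spine hjs
      by_cases his : G.dist u i + G.dist i v = G.dist u v
      · have hpi : TreeWC.posFn G u v i = 2 * G.dist u i := TreeWC.posFn_spine his
        omega
      · obtain ⟨hpi, hi1, hi2, hi3, hi4⟩ := hoffc i his
        omega
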